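/- arXiv:1710.09313 — 2 statements merged into one kernel-verified Lean document; each statement's English description precedes it below -/
import Mathlib

section
/- For integers d > e ≥ 2, the sum 2·( Σ_{j₀=1}^{e} Σ_{j₁=e+1}^{d−1} C(j₁−e, 2)·2^{j₀+d−j₁−2} + (C(d−e, 2) + C(d−e+1, 2))·Σ_{j₀=2}^{e} 2^{j₀−2} + C(d−e, 2) ) is strictly less than 2^{d+1}. -/
lemma geo_aux (n : ℕ) : (∑ a ∈ Finset.range n, 2 ^ a) + 1 = 2 ^ n := by
  induction n with
  | zero => simp
  | succ k ih => rw [Finset.sum_range_succ, pow_succ]; omega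

lemma two_choose2 (n : ℕ) : 2 * (n + 1).choose 2 = n * (n + 1) := by
  induction n with
  | zero => rfl
  | succ k ih =>
    have h : (k + 2).choose 2 = (k + 1).choose 1 + (k + 1).choose 2 :=
      Nat.choose_succ_succ (k + 1) 1
    calc 2 * (k + 1 + 1).choose 2 = 2 * (k + 1) + 2 * (k + 1).choose 2 := by
          rw [h, Nat.choose_one_right]; ring
    _ = 2 * (k + 1) + k * (k + 1) := by omega
    _ = (k + 1) * (k + 1 + 1) := by ring

lemma Tsum (m : ℕ) :
    2 * (∑ i ∈ Finset.range m, (i + 1).choose 2 * 2 ^ (m - 1 - i)) + (m * m + 3 * m + 4)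
      = 2 ^ (m + 2) := by
  induction m with
  | zero => simp
  | succ n ih =>
    rw [Finset.sum_range_succ]
    have hstep : ∀ i ∈ Finset.range n,
        (i + 1).choose 2 * 2 ^ (n + 1 - 1 - i) = 2 * ((i + 1).choose 2 * 2 ^ (n - 1 - i)) := by
      intro i hi
      rw [Finset.mem_range] at hi
      rw [show n + 1 - 1 - i = (n - 1 - i) + 1 from by omega, pow_succ]
      ring
    rw [Finset.sum_congr rfl hstep, ← Finset.mul_sum]
    have h0 : n + 1 - 1 - n = 0 := by omega
    rw [h0, pow_zero, mul_one]
    have hc := two_choose2 n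
    have hm : n * (n + 1) = n * n + n := by ring
    have hsq : (n + 1) * (n + 1) = n * n + 2 * n + 1 := by ring
    have hp : (2 : ℕ) ^ (n + 1 + 2) = 2 * 2 ^ (n + 2) := by ring
    omega

theorem carry_pattern_count_lt (d e : ℕ) (he : 2 ≤ e) (hed : e < d) :
    2 * (∑ j₀ ∈ Finset.Icc 1 e, ∑ j₁ ∈ Finset.Icc (e + 1) (d - 1),
          (j₁ - e).choose 2 * 2 ^ (j₀ + d - j₁ - 2)
        + ((d - e).choose 2 + (d - e + 1).choose 2) * ∑ j₀ ∈ Finset.Icc 2 e, 2 ^ (j₀ - 2)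
        + (d - e).choose 2)
      < 2 ^ (d + 1) := by
  obtain ⟨m, rfl⟩ : ∃ m, d = e + m + 1 := ⟨d - e - 1, by omega⟩
  have hd1 : e + m + 1 - 1 = e + m := by omega
  have hde : e + m + 1 - e = m + 1 := by omega
  rw [hd1, hde]
  -- closed form of the double sum
  have hdouble : (∑ j₀ ∈ Finset.Icc 1 e, ∑ j₁ ∈ Finset.Icc (e + 1) (e + m),
        (j₁ - e).choose 2 * 2 ^ (j₀ + (e + m + 1) - j₁ - 2))
      = (∑ a ∈ Finset.range e, 2 ^ a)
        * (∑ i ∈ Finset.range m, (i + 1).choose 2 * 2 ^ (m - 1 - i)) := by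
    rw [← Finset.Ico_add_one_right_eq_Icc 1 e, Finset.sum_Ico_eq_sum_range,
      show e + 1 - 1 = e from by omega]
    rw [Finset.sum_mul]
    refine Finset.sum_congr rfl ?_
    intro a _
    rw [← Finset.Ico_add_one_right_eq_Icc (e + 1) (e + m), Finset.sum_Ico_eq_sum_range,
      show e + m + 1 - (e + 1) = m from by omega]
    rw [Finset.mul_sum]
    refine Finset.sum_congr rfl ?_
    intro i hi
    rw [Finset.mem_range] at hi
    rw [show e + 1 + i - e = i + 1 from by omega,
      show 1 + a + (e + m + 1) - (e + 1 + i) - 2 = a + (m - 1 - i) from by omega,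
      pow_add]
    ring
  -- closed form of the second sum
  have hsum2 : (∑ j₀ ∈ Finset.Icc 2 e, 2 ^ (j₀ - 2)) = ∑ a ∈ Finset.range (e - 1), 2 ^ a := by
    rw [← Finset.Ico_add_one_right_eq_Icc 2 e, Finset.sum_Ico_eq_sum_range,
      show e + 1 - 2 = e - 1 from by omega]
    refine Finset.sum_congr rfl ?_
    intro a _
    rw [show 2 + a - 2 = a from by omega]
  have hTS := Tsum m
  have hAe := geo_aux e
  have hBe := geo_aux (e - 1)
  have hcc := two_choose2 m
  have hcc2 := two_choose2 (m + 1)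
  rw [hdouble, hsum2]
  generalize (∑ i ∈ Finset.range m, (i + 1).choose 2 * 2 ^ (m - 1 - i)) = S at hTS ⊢
  generalize (∑ a ∈ Finset.range e, 2 ^ a) = A at hAe ⊢
  generalize (∑ a ∈ Finset.range (e - 1), 2 ^ a) = B at hBe ⊢
  generalize (m + 1).choose 2 = c at hcc ⊢
  generalize (m + 1 + 1).choose 2 = c2 at hcc2
  have hDpow : (2 : ℤ) ^ (e + m + 1 + 1) = 2 * 2 ^ (e - 1) * 2 ^ (m + 2) := by
    rw [← pow_succ', ← pow_add]
    congr 1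
    omega
  have hP : (2 : ℤ) ≤ 2 ^ (e - 1) := by
    calc (2 : ℤ) = 2 ^ 1 := by norm_num
    _ ≤ 2 ^ (e - 1) := by
        apply pow_le_pow_right₀ (by norm_num)
        omega
  have hX : (4 : ℤ) ≤ 2 ^ (m + 2) := by
    calc (4 : ℤ) = 2 ^ 2 := by norm_num
    _ ≤ 2 ^ (m + 2) := by
        apply pow_le_pow_right₀ (by norm_num)
        omega
  have hEpow : (2 : ℤ) ^ e = 2 * 2 ^ (e - 1) := by
    rw [← pow_succ']
    congr 1
    omega
  zify at hTS hAe hBe hcc hcc2 ⊢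
  set P : ℤ := (2 : ℤ) ^ (e - 1) with hPdef
  set X : ℤ := (2 : ℤ) ^ (m + 2) with hXdef
  have hAv : (A : ℤ) = 2 * P - 1 := by linarith [hAe, hEpow]
  have hBv : (B : ℤ) = P - 1 := by linarith [hBe]
  have hkey : 4 * ((A : ℤ) * S + (c + c2) * B + c) + 2 * X + 4 * P * m + 12 * P
      = 4 * P * X + 4 := by
    rw [hAv, hBv]
    linear_combination (4 * P - 2) * hTS + 2 * P * hcc + (2 * P - 2) * hcc2
  have hPm : (0 : ℤ) ≤ P * (m : ℤ) := by positivity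
  rw [hDpow]
  nlinarith [hkey, hP, hX, hPm]
end

section
/- For integers d > e ≥ 2, the following closed-form identity holds: 2·( Σ_{j₀=1}^{e} Σ_{j₁=e+1}^{d−1} C(j₁−e, 2)·2^{j₀+d−j₁−2} + (C(d−e,2)+C(d−e+1,2))·Σ_{j₀=2}^{e} 2^{j₀−2} + C(d−e,2) ) = ((2^e − 1)/2^{e−1})·(2^d − 2^e) − (d−e)·2^e, as an identity of rational numbers. -/
private lemma aux1 (e : ℕ) : ∑ j ∈ Finset.Icc 1 e, (2:ℚ)^(j-1) = 2^e - 1 := by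
  induction e with
  | zero => simp
  | succ k ih =>
      rw [Finset.sum_Icc_succ_top (by omega), ih, Nat.add_sub_cancel]
      ring

private lemma aux2 (e : ℕ) : ∑ j ∈ Finset.Icc 2 (e+2), (2:ℚ)^(j-2) = 2^(e+1) - 1 := by
  induction e with
  | zero => norm_num
  | succ k ih =>
      rw [show k+1+2 = (k+2)+1 from rfl, Finset.sum_Icc_succ_top (by omega), ih,
        show k+2+1-2 = k+1 from rfl]
      ring

private lemma aux3 (K : ℕ) :
    ∑ m ∈ Finset.Icc 1 K, ((m.choose 2 : ℚ))/2^m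
      = 2 - ((K:ℚ)^2+3*K+4)/2^(K+1) := by
  induction K with
  | zero => norm_num
  | succ k ih =>
      rw [Finset.sum_Icc_succ_top (by omega), ih, Nat.cast_choose_two]
      have h2 : (2:ℚ)^(k+1) ≠ 0 := by positivity
      push_cast
      field_simp
      ring

theorem carry_pattern_count_closed_form (d e : ℕ) (he : 2 ≤ e) (hed : e < d) :
    (2 : ℚ) * (∑ j₀ ∈ Finset.Icc 1 e, ∑ j₁ ∈ Finset.Icc (e + 1) (d - 1),
          ((j₁ - e).choose 2 : ℚ) * 2 ^ (j₀ + d - j₁ - 2)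
        + (((d - e).choose 2 : ℚ) + ((d - e + 1).choose 2 : ℚ)) *
            ∑ j₀ ∈ Finset.Icc 2 e, (2 : ℚ) ^ (j₀ - 2)
        + ((d - e).choose 2 : ℚ))
      = ((2 ^ e - 1) / 2 ^ (e - 1)) * (2 ^ d - 2 ^ e) - ((d : ℚ) - e) * 2 ^ e := by
  obtain ⟨a, rfl⟩ : ∃ a, e = a + 2 := ⟨e - 2, by omega⟩
  obtain ⟨b, rfl⟩ : ∃ b, d = a + 3 + b := ⟨d - (a + 3), by omega⟩
  have hmap : Finset.Icc (a + 2 + 1) (a + 3 + b - 1)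
      = (Finset.Icc 1 b).map (addLeftEmbedding (a + 2)) := by
    rw [Finset.map_add_left_Icc]
    congr 1 <;> omega
  have hdouble : ∀ j₀ ∈ Finset.Icc 1 (a + 2),
      (∑ j₁ ∈ Finset.Icc (a + 2 + 1) (a + 3 + b - 1),
        ((j₁ - (a + 2)).choose 2 : ℚ) * 2 ^ (j₀ + (a + 3 + b) - j₁ - 2))
      = 2 ^ (j₀ - 1) * (2 ^ b * ∑ m ∈ Finset.Icc 1 b, ((m.choose 2 : ℚ))/2^m) := by
    intro j₀ hj₀
    rw [Finset.mem_Icc] at hj₀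
    rw [hmap, Finset.sum_map, Finset.mul_sum, Finset.mul_sum]
    apply Finset.sum_congr rfl
    intro m hm
    rw [Finset.mem_Icc] at hm
    rw [addLeftEmbedding_apply]
    have h1 : a + 2 + m - (a + 2) = m := by omega
    have h2 : j₀ + (a + 3 + b) - (a + 2 + m) - 2 = (j₀ - 1) + (b - m) := by omega
    rw [h1, h2, pow_add, pow_sub₀ (2:ℚ) (by norm_num) hm.2]
    ring
  rw [Finset.sum_congr rfl hdouble, ← Finset.sum_mul, aux1, aux3, aux2]
  have h3 : a + 3 + b - (a + 2) = b + 1 := by omega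
  rw [h3, show a + 2 - 1 = a + 1 from rfl, show b + 1 + 1 = b + 2 from rfl,
    Nat.cast_choose_two, Nat.cast_choose_two]
  have h4 : (2:ℚ)^(a+1) ≠ 0 := by positivity
  have h5 : (2:ℚ)^(b+1) ≠ 0 := by positivity
  push_cast
  field_simp
  ring
end
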